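/- Let c > 0 and define φ_c : ℝ → ℝ by φ_c(t) = |2c − |t − c|| − c. Let U ⊆ ℝ^n be open, k a nonnegative integer, and G : U → ℝ a function of class C^k on U. Let i be a natural number and x ∈ U a point such that |φ_c^{[i]}(G(x))| ≠ c. Then the function φ_c^{[i]} ∘ G is of class C^k on a neighborhood of x (in particular, it is k times continuously differentiable at x). -/

import Mathlib

private lemma phi_contDiffAt (c : ℝ) (k : ℕ) {t : ℝ} (h1 : t ≠ c) (h2 : t ≠ -c) (h3 : t ≠ 3 * c) :
    ContDiffAt ℝ k (fun t => abs (2 * c - abs (t - c)) - c) t := by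
  have hsub : ContDiffAt ℝ k (fun t : ℝ => t - c) t := (contDiffAt_id).sub contDiffAt_const
  have habs1 : ContDiffAt ℝ k (fun t : ℝ => abs (t - c)) t :=
    hsub.abs (sub_ne_zero.mpr h1)
  have hinner : ContDiffAt ℝ k (fun t : ℝ => 2 * c - abs (t - c)) t :=
    contDiffAt_const.sub habs1
  have hne : 2 * c - abs (t - c) ≠ 0 := by
    intro h
    have h0 : abs (t - c) = 2 * c := by linarith
    rcases (abs_eq (by linarith [abs_nonneg (t - c)] : (0:ℝ) ≤ 2 * c)).mp h0 with h' | h'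
    · exact h3 (by linarith)
    · exact h2 (by linarith)
  exact ((contDiffAt_abs hne).comp t hinner).sub contDiffAt_const

private lemma phi_fix (c : ℝ) (hc : 0 ≤ c) {y : ℝ} (hy : |y| = c) :
    |(fun t => abs (2 * c - abs (t - c)) - c) y| = c := by
  rcases (abs_eq hc).mp hy with h | h
  · simp only [h]
    rw [sub_self, abs_zero, sub_zero, abs_of_nonneg (by linarith : (0:ℝ) ≤ 2 * c)]
    have h2 : 2 * c - c = c := by ring
    rw [h2, abs_of_nonneg hc]
  · simp only [h]
    have h1 : -c - c = -(2 * c) := by ring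
    rw [h1, abs_neg, abs_of_nonneg (by linarith : (0:ℝ) ≤ 2 * c), sub_self, abs_zero,
      zero_sub, abs_neg, abs_of_nonneg hc]

private lemma phi_iter_contDiffAt (c : ℝ) (hc : 0 < c) (k : ℕ) {y : ℝ} (i : ℕ)
    (hne : |(fun t => abs (2 * c - abs (t - c)) - c)^[i] y| ≠ c) :
    ContDiffAt ℝ k (fun t => abs (2 * c - abs (t - c)) - c)^[i] y := by
  induction i with
  | zero => simpa using contDiffAt_id
  | succ m ih =>
    rw [Function.iterate_succ'] at hne ⊢
    set φ : ℝ → ℝ := fun t => abs (2 * c - abs (t - c)) - c with hφdef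
    set z := φ^[m] y with hz
    have hz_abs : |z| ≠ c := fun h => hne (phi_fix c hc.le h)
    have hz3 : z ≠ 3 * c := by
      intro h
      apply hne
      show |φ z| = c
      rw [hφdef, h]
      simp only []
      have h' : 3 * c - c = 2 * c := by ring
      rw [h', abs_of_nonneg (by linarith : (0:ℝ) ≤ 2 * c), sub_self, abs_zero, zero_sub,
        abs_neg, abs_of_nonneg hc.le]
    have h1 : z ≠ c := fun h => hz_abs (by rw [h, abs_of_nonneg hc.le])
    have h2 : z ≠ -c := fun h => hz_abs (by rw [h, abs_neg, abs_of_nonneg hc.le])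
    exact (phi_contDiffAt c k h1 h2 hz3).comp y (ih hz_abs)

theorem stmt9 (n k : ℕ) (c : ℝ) (hc : 0 < c)
    (U : Set (Fin n → ℝ)) (hU : IsOpen U) (G : (Fin n → ℝ) → ℝ)
    (hG : ContDiffOn ℝ k G U) (i : ℕ) (x : Fin n → ℝ) (hx : x ∈ U)
    (hne : abs ((fun t => abs (2 * c - abs (t - c)) - c)^[i] (G x)) ≠ c) :
    ∃ V ∈ nhds x, V ⊆ U ∧
      ContDiffOn ℝ k (fun y => (fun t => abs (2 * c - abs (t - c)) - c)^[i] (G y)) V := by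
  have hGx : ContDiffAt ℝ k G x := hG.contDiffAt (hU.mem_nhds hx)
  have hφ : ContDiffAt ℝ k (fun t => abs (2 * c - abs (t - c)) - c)^[i] (G x) :=
    phi_iter_contDiffAt c hc k i hne
  have hcomp : ContDiffAt ℝ k
      (fun y => (fun t => abs (2 * c - abs (t - c)) - c)^[i] (G y)) x := hφ.comp x hGx
  obtain ⟨u, hu, hOn⟩ := hcomp.contDiffOn le_rfl (by simp)
  exact ⟨u ∩ U, Filter.inter_mem hu (hU.mem_nhds hx), Set.inter_subset_right,
    hOn.mono Set.inter_subset_left⟩
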